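/- Let γ, σ, β be continuous real-valued functions on [t₀, ∞) and let μ ∈ C¹[t₀, ∞) be positive. Suppose 0 ≤ σ(t) ≤ (μ(t)/2)(γ(t) − μ'(t)/μ(t)), β(t) ≤ (1/(2μ(t)))(γ(t) − μ'(t)/μ(t)) for all t ≥ t₀, and g₀ μ(t₀) < 1. Then every nonnegative C¹ function g on [t₀, ∞) satisfying g'(t) ≤ −γ(t) g(t) + σ(t) g(t)² + β(t) and g(t₀) = g₀ satisfies 0 ≤ g(t) < 1/μ(t) for all t ≥ t₀. -/

import Mathlib

open Set

theorem riccati_inequality_bound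
    (t₀ g₀ : ℝ) (γ σ β μ μ' g g' : ℝ → ℝ)
    (hγ : ContinuousOn γ (Ici t₀)) (hσ : ContinuousOn σ (Ici t₀))
    (hβ : ContinuousOn β (Ici t₀))
    (hμ' : ∀ t ∈ Ici t₀, HasDerivWithinAt μ (μ' t) (Ici t₀) t)
    (hμ'cont : ContinuousOn μ' (Ici t₀))
    (hμpos : ∀ t ∈ Ici t₀, 0 < μ t)
    (hσbound : ∀ t ∈ Ici t₀, 0 ≤ σ t ∧ σ t ≤ (μ t / 2) * (γ t - μ' t / μ t))
    (hβbound : ∀ t ∈ Ici t₀, β t ≤ (1 / (2 * μ t)) * (γ t - μ' t / μ t))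
    (hinit : g₀ * μ t₀ < 1)
    (hgnonneg : ∀ t ∈ Ici t₀, 0 ≤ g t)
    (hg' : ∀ t ∈ Ici t₀, HasDerivWithinAt g (g' t) (Ici t₀) t)
    (hgineq : ∀ t ∈ Ici t₀, g' t ≤ -γ t * g t + σ t * (g t) ^ 2 + β t)
    (hg0 : g t₀ = g₀) :
    ∀ t ∈ Ici t₀, 0 ≤ g t ∧ g t < 1 / μ t := by
  have hgc : ContinuousOn g (Ici t₀) := fun t ht => (hg' t ht).continuousWithinAt
  have hμc : ContinuousOn μ (Ici t₀) := fun t ht => (hμ' t ht).continuousWithinAt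
  have hhc : ContinuousOn (fun t => g t * μ t) (Ici t₀) := hgc.mul hμc
  have hkc : ContinuousOn (fun t => γ t - μ' t / μ t) (Ici t₀) :=
    hγ.sub (hμ'cont.div hμc (fun t ht => (hμpos t ht).ne'))
  have hknn : ∀ t ∈ Ici t₀, 0 ≤ γ t - μ' t / μ t := by
    intro t ht
    obtain ⟨h0, hb⟩ := hσbound t ht
    have hμt := hμpos t ht
    nlinarith
  have key : ∀ t ∈ Ici t₀,
      g' t * μ t + g t * μ' t ≤ (γ t - μ' t / μ t) / 2 * (g t * μ t - 1) ^ 2 := by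
    intro t ht
    obtain ⟨hσ0, hσb⟩ := hσbound t ht
    have hβb := hβbound t ht
    have hμt := hμpos t ht
    have hgt := hgnonneg t ht
    have h1 := hgineq t ht
    have hμ'eq : μ' t = (μ' t / μ t) * μ t := (div_mul_cancel₀ _ hμt.ne').symm
    have hμ'g : g t * μ' t = g t * (μ' t / μ t) * μ t := by
      rw [mul_assoc, ← hμ'eq]
    have hβμ : β t * μ t ≤ (γ t - μ' t / μ t) / 2 := by
      have h2 : (1 / (2 * μ t)) * (γ t - μ' t / μ t) * μ t = (γ t - μ' t / μ t) / 2 := by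
        field_simp
      calc β t * μ t ≤ (1 / (2 * μ t)) * (γ t - μ' t / μ t) * μ t :=
            mul_le_mul_of_nonneg_right hβb hμt.le
        _ = _ := h2
    have h1μ : g' t * μ t ≤ (-γ t * g t + σ t * g t ^ 2 + β t) * μ t :=
      mul_le_mul_of_nonneg_right h1 hμt.le
    have hσμ : σ t * (g t ^ 2 * μ t) ≤ (μ t / 2) * (γ t - μ' t / μ t) * (g t ^ 2 * μ t) :=
      mul_le_mul_of_nonneg_right hσb (mul_nonneg (sq_nonneg _) hμt.le)
    nlinarith [h1μ, hσμ, hβμ, hμ'g]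
  intro T hT
  refine ⟨hgnonneg T hT, ?_⟩
  rw [lt_div_iff₀ (hμpos T hT)]
  by_contra hcon
  push_neg at hcon
  set S : Set ℝ := {t ∈ Icc t₀ T | 1 ≤ g t * μ t} with hS
  have hTS : T ∈ S := ⟨⟨hT, le_refl T⟩, hcon⟩
  have hSb : BddBelow S := ⟨t₀, fun x hx => hx.1.1⟩
  have hScl : IsClosed S := by
    have hSeq : S = Icc t₀ T ∩ (fun t => g t * μ t) ⁻¹' Ici 1 := by
      ext x; simp [hS, Set.mem_sep_iff]
    rw [hSeq]
    exact (hhc.mono (Icc_subset_Ici_self)).preimage_isClosed_of_isClosed isClosed_Icc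
      isClosed_Ici
  set t₁ := sInf S with ht₁def
  have ht₁S : t₁ ∈ S := hScl.csInf_mem ⟨T, hTS⟩ hSb
  obtain ⟨⟨ht₀t₁, ht₁T⟩, h1le⟩ := ht₁S
  have ht₀lt : t₀ < t₁ := by
    rcases ht₀t₁.lt_or_eq with h | h
    · exact h
    · exfalso
      rw [← h, hg0] at h1le
      linarith
  have hlt : ∀ t ∈ Ico t₀ t₁, g t * μ t < 1 := by
    rintro t ⟨ht0, ht1⟩
    by_contra hc
    push_neg at hc
    have htS : t ∈ S := ⟨⟨ht0, ht1.le.trans ht₁T⟩, hc⟩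
    exact absurd (csInf_le hSb htS) (not_le.mpr ht1)
  have hIcc : Icc t₀ t₁ ⊆ Ici t₀ := Icc_subset_Ici_self
  have hh1c : ContinuousOn (fun t => g t * μ t - 1) (Ici t₀) := hhc.sub continuousOn_const
  obtain ⟨B, hB⟩ := (isCompact_Icc).exists_bound_of_continuousOn (hh1c.mono hIcc)
  obtain ⟨K, hK⟩ := (isCompact_Icc).exists_bound_of_continuousOn (hkc.mono hIcc)
  have ht₀mem : t₀ ∈ Icc t₀ t₁ := left_mem_Icc.mpr ht₀t₁
  have hB0 : (0:ℝ) ≤ B := le_trans (norm_nonneg _) (hB t₀ ht₀mem)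
  have hK0 : (0:ℝ) ≤ K := le_trans (norm_nonneg _) (hK t₀ ht₀mem)
  set C : ℝ := K * B / 2 with hC
  set φ : ℝ → ℝ := fun t => (g t * μ t - 1) * Real.exp (C * t) with hφ
  have hφc : ContinuousOn φ (Icc t₀ t₁) :=
    (hh1c.mono hIcc).mul ((Real.continuous_exp.comp (continuous_const.mul continuous_id)).continuousOn)
  have hφd : ∀ t ∈ interior (Icc t₀ t₁), HasDerivAt φ
      ((g' t * μ t + g t * μ' t) * Real.exp (C * t) +
        (g t * μ t - 1) * (Real.exp (C * t) * C)) t := by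
    intro t htI
    rw [interior_Icc] at htI
    have htmem : t ∈ Ici t₀ := le_of_lt htI.1
    have hnbd : Ici t₀ ∈ nhds t := Ici_mem_nhds htI.1
    have hgd : HasDerivAt g (g' t) t := (hg' t htmem).hasDerivAt hnbd
    have hμd : HasDerivAt μ (μ' t) t := (hμ' t htmem).hasDerivAt hnbd
    have hexp : HasDerivAt (fun s => Real.exp (C * s)) (Real.exp (C * t) * C) t := by
      convert ((hasDerivAt_id t).const_mul C).exp using 1 <;> simp
    exact ((hgd.mul hμd).sub_const 1).mul hexp
  have hderiv_nonpos : ∀ t ∈ interior (Icc t₀ t₁), deriv φ t ≤ 0 := by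
    intro t htI
    rw [(hφd t htI).deriv]
    rw [interior_Icc] at htI
    have htmem : t ∈ Ici t₀ := le_of_lt htI.1
    have hkey := key t htmem
    have hu : g t * μ t < 1 := hlt t ⟨htI.1.le, htI.2⟩
    have htIcc : t ∈ Icc t₀ t₁ := ⟨htI.1.le, htI.2.le⟩
    have hBt := hB t htIcc
    have hKt := hK t htIcc
    rw [Real.norm_eq_abs, abs_le] at hBt hKt
    have h1 : 1 - g t * μ t ≤ B := by linarith [hBt.1]
    have h2 : γ t - μ' t / μ t ≤ K := hKt.2
    have hk0 : 0 ≤ γ t - μ' t / μ t := hknn t htmem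
    have hv : 0 ≤ 1 - g t * μ t := by linarith
    have hexp0 : (0:ℝ) < Real.exp (C * t) := Real.exp_pos _
    have hsum : g' t * μ t + g t * μ' t + (g t * μ t - 1) * C ≤ 0 := by
      have hq : (γ t - μ' t / μ t) / 2 * (g t * μ t - 1) ^ 2 ≤ C * (1 - g t * μ t) := by
        have hp1 : 0 ≤ (K - (γ t - μ' t / μ t)) * (1 - g t * μ t) ^ 2 :=
          mul_nonneg (by linarith) (sq_nonneg _)
        have hp2 : 0 ≤ K * (1 - g t * μ t) * (B - (1 - g t * μ t)) :=
          mul_nonneg (mul_nonneg hK0 hv) (by linarith)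
        rw [hC]
        nlinarith [hp1, hp2]
      linarith [hkey]
    nlinarith [mul_le_mul_of_nonneg_right hsum hexp0.le]
  have hanti : AntitoneOn φ (Icc t₀ t₁) :=
    antitoneOn_of_deriv_nonpos (convex_Icc t₀ t₁) hφc
      (fun t ht => (hφd t ht).differentiableAt.differentiableWithinAt) hderiv_nonpos
  have hle := hanti ht₀mem (right_mem_Icc.mpr ht₀t₁) ht₀t₁
  have hφ0 : φ t₀ < 0 := by
    have hneg : g t₀ * μ t₀ - 1 < 0 := by rw [hg0]; linarith
    exact mul_neg_of_neg_of_pos hneg (Real.exp_pos _)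
  have hφ1 : (0:ℝ) ≤ φ t₁ := mul_nonneg (by linarith) (Real.exp_pos _).le
  linarith
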